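/- Let H be a Hopf algebra over ℂ and A a left H-module algebra. The Connes–Moscovici algebra H_CM = A ⊗ H ⊗ A^op with multiplication (a⊗h⊗b)·(a'⊗h'⊗b') = a(h₍₁₎▷a') ⊗ h₍₂₎h' ⊗ (h₍₃₎▷b')b is an associative unital algebra with unit 1⊗1⊗1. -/
import Mathlib

open TensorProduct

namespace CM9

/-- Every element of a triple tensor product is a finite ℕ-indexed sum of pure tensors. -/
lemma rep3 {M N P : Type*} [AddCommGroup M] [AddCommGroup N] [AddCommGroup P]
    [Module ℂ M] [Module ℂ N] [Module ℂ P] (x : M ⊗[ℂ] (N ⊗[ℂ] P)) :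
    ∃ (n : ℕ) (f : ℕ → M) (g : ℕ → N) (k : ℕ → P),
      x = ∑ i ∈ Finset.range n, f i ⊗ₜ[ℂ] (g i ⊗ₜ[ℂ] k i) := by
  have hadd : ∀ x y : M ⊗[ℂ] (N ⊗[ℂ] P),
      (∃ (n : ℕ) (f : ℕ → M) (g : ℕ → N) (k : ℕ → P), x = ∑ i ∈ Finset.range n, f i ⊗ₜ[ℂ] (g i ⊗ₜ[ℂ] k i)) →
      (∃ (n : ℕ) (f : ℕ → M) (g : ℕ → N) (k : ℕ → P), y = ∑ i ∈ Finset.range n, f i ⊗ₜ[ℂ] (g i ⊗ₜ[ℂ] k i)) →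
      (∃ (n : ℕ) (f : ℕ → M) (g : ℕ → N) (k : ℕ → P), x + y = ∑ i ∈ Finset.range n, f i ⊗ₜ[ℂ] (g i ⊗ₜ[ℂ] k i)) := by
    rintro x y ⟨n, f, g, k, rfl⟩ ⟨m, f', g', k', rfl⟩
    refine ⟨n + m, fun i => if i < n then f i else f' (i - n),
      fun i => if i < n then g i else g' (i - n),
      fun i => if i < n then k i else k' (i - n), ?_⟩
    rw [Finset.sum_range_add]
    congr 1
    · exact Finset.sum_congr rfl fun i hi => by
        rw [Finset.mem_range] at hi; simp [hi]
    · exact Finset.sum_congr rfl fun i _ => by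
        simp [Nat.not_lt.2 (Nat.le_add_right n i), Nat.add_sub_cancel_left]
  refine TensorProduct.induction_on x ⟨0, 0, 0, 0, by simp⟩ (fun m y => ?_) hadd
  induction y using TensorProduct.induction_on with
  | zero => exact ⟨0, 0, 0, 0, by simp⟩
  | tmul u p => exact ⟨1, fun _ => m, fun _ => u, fun _ => p, by simp⟩
  | add y z hy hz => rw [tmul_add]; exact hadd _ _ hy hz

/-- Every element of a double tensor product is a finite ℕ-indexed sum of pure tensors. -/
lemma rep2 {M N : Type*} [AddCommGroup M] [AddCommGroup N]
    [Module ℂ M] [Module ℂ N] (x : M ⊗[ℂ] N) :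
    ∃ (n : ℕ) (f : ℕ → M) (g : ℕ → N),
      x = ∑ i ∈ Finset.range n, f i ⊗ₜ[ℂ] g i := by
  have hadd : ∀ x y : M ⊗[ℂ] N,
      (∃ (n : ℕ) (f : ℕ → M) (g : ℕ → N), x = ∑ i ∈ Finset.range n, f i ⊗ₜ[ℂ] g i) →
      (∃ (n : ℕ) (f : ℕ → M) (g : ℕ → N), y = ∑ i ∈ Finset.range n, f i ⊗ₜ[ℂ] g i) →
      (∃ (n : ℕ) (f : ℕ → M) (g : ℕ → N), x + y = ∑ i ∈ Finset.range n, f i ⊗ₜ[ℂ] g i) := by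
    rintro x y ⟨n, f, g, rfl⟩ ⟨m, f', g', rfl⟩
    refine ⟨n + m, fun i => if i < n then f i else f' (i - n),
      fun i => if i < n then g i else g' (i - n), ?_⟩
    rw [Finset.sum_range_add]
    congr 1
    · exact Finset.sum_congr rfl fun i hi => by
        rw [Finset.mem_range] at hi; simp [hi]
    · exact Finset.sum_congr rfl fun i _ => by
        simp [Nat.not_lt.2 (Nat.le_add_right n i), Nat.add_sub_cancel_left]
  refine TensorProduct.induction_on x ⟨0, 0, 0, by simp⟩
    (fun m y => ⟨1, fun _ => m, fun _ => y, by simp⟩) hadd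

/-- Pointwise extension principle for linear maps out of a triple tensor product. -/
lemma ext_pt {M N P Y : Type*} [AddCommGroup M] [AddCommGroup N] [AddCommGroup P]
    [AddCommGroup Y] [Module ℂ M] [Module ℂ N] [Module ℂ P] [Module ℂ Y]
    (F G : M ⊗[ℂ] (N ⊗[ℂ] P) →ₗ[ℂ] Y)
    (hp : ∀ m n p, F (m ⊗ₜ[ℂ] (n ⊗ₜ[ℂ] p)) = G (m ⊗ₜ[ℂ] (n ⊗ₜ[ℂ] p))) (x) :
    F x = G x := by
  induction x using TensorProduct.induction_on with
  | zero => simp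
  | add u v hu hv => rw [map_add, map_add, hu, hv]
  | tmul m y =>
    induction y using TensorProduct.induction_on with
    | zero => rw [tmul_zero]; simp
    | tmul n p => exact hp m n p
    | add u v hu hv => rw [tmul_add, map_add, map_add, hu, hv]


variable (H : Type*) [Ring H] [HopfAlgebra ℂ H]

/-- The iterated comultiplication `(1 ⊗ Δ) ∘ Δ`. -/
noncomputable def T2 : H →ₗ[ℂ] H ⊗[ℂ] (H ⊗[ℂ] H) :=
  (LinearMap.lTensor H (Coalgebra.comul (R := ℂ))) ∘ₗ (Coalgebra.comul (R := ℂ))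

lemma T2_apply (h : H) :
    T2 H h = (LinearMap.lTensor H (Coalgebra.comul (R := ℂ))) (Coalgebra.comul (R := ℂ) h) := rfl

lemma lTensor_comul_eq :
    LinearMap.lTensor H (Coalgebra.comul (R := ℂ)) =
      (Algebra.TensorProduct.map (AlgHom.id ℂ H) (Bialgebra.comulAlgHom ℂ H)).toLinearMap := by
  apply TensorProduct.ext'
  intro x y
  simp [Algebra.TensorProduct.map_tmul]

lemma T2_eq_algHom :
    T2 H = ((Algebra.TensorProduct.map (AlgHom.id ℂ H) (Bialgebra.comulAlgHom ℂ H)).comp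
      (Bialgebra.comulAlgHom ℂ H)).toLinearMap := by
  rw [T2, lTensor_comul_eq]; rfl

lemma T2_mul (g h : H) : T2 H (g * h) = T2 H g * T2 H h := by
  rw [T2_eq_algHom, AlgHom.toLinearMap_apply, AlgHom.toLinearMap_apply,
    AlgHom.toLinearMap_apply, map_mul]

lemma T2_one : T2 H (1 : H) = (1 : H) ⊗ₜ[ℂ] ((1 : H) ⊗ₜ[ℂ] (1 : H)) := by
  rw [T2_eq_algHom]
  have : ((Algebra.TensorProduct.map (AlgHom.id ℂ H) (Bialgebra.comulAlgHom ℂ H)).comp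
      (Bialgebra.comulAlgHom ℂ H)) 1 = 1 := map_one _
  rw [AlgHom.toLinearMap_apply, this, Algebra.TensorProduct.one_def,
    Algebra.TensorProduct.one_def]

/-- `ε ⊗ 1 ⊗ ε`, as a linear map `H ⊗ (H ⊗ H) → H`. -/
noncomputable def Emap : H ⊗[ℂ] (H ⊗[ℂ] H) →ₗ[ℂ] H :=
  (TensorProduct.lid ℂ H).toLinearMap ∘ₗ
    TensorProduct.map (Coalgebra.counit (R := ℂ))
      ((TensorProduct.rid ℂ H).toLinearMap ∘ₗ LinearMap.lTensor H (Coalgebra.counit (R := ℂ)))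

lemma Emap_tmul (f g k : H) :
    Emap H (f ⊗ₜ[ℂ] (g ⊗ₜ[ℂ] k)) =
      (Coalgebra.counit (R := ℂ) f) • ((Coalgebra.counit (R := ℂ) k) • g) := by
  simp [Emap, TensorProduct.map_tmul, TensorProduct.rid_tmul, TensorProduct.lid_tmul]
  rw [smul_comm]

lemma Emap_T2 (h : H) : Emap H (T2 H h) = h := by
  have hinner : (TensorProduct.rid ℂ H).toLinearMap ∘ₗ
      LinearMap.lTensor H (Coalgebra.counit (R := ℂ)) ∘ₗ (Coalgebra.comul (R := ℂ)) =
      (LinearMap.id : H →ₗ[ℂ] H) := by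
    apply LinearMap.ext
    intro x
    simp only [LinearMap.comp_apply, Coalgebra.lTensor_counit_comul, LinearEquiv.coe_coe,
      TensorProduct.rid_tmul, one_smul, LinearMap.id_apply]
  have h1 : Emap H ∘ₗ T2 H = (TensorProduct.lid ℂ H).toLinearMap ∘ₗ
      LinearMap.rTensor H (Coalgebra.counit (R := ℂ)) ∘ₗ
      (Coalgebra.comul (R := ℂ)) := by
    rw [Emap, T2]
    simp only [LinearMap.comp_assoc]
    congr 1
    rw [← LinearMap.comp_assoc, LinearMap.map_comp_lTensor, LinearMap.comp_assoc, hinner]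
    rfl
  have h2 := LinearMap.congr_fun h1 h
  simp only [LinearMap.comp_apply] at h2
  rw [h2, Coalgebra.rTensor_counit_comul]
  simp [TensorProduct.lid_tmul]

/-- The regrouping `h₁⊗((h₂⊗(h₃⊗h₄))⊗h₅) ↦ (h₁⊗h₂)⊗(h₃⊗(h₄⊗h₅))`. -/
noncomputable def alphaMap :
    H ⊗[ℂ] ((H ⊗[ℂ] (H ⊗[ℂ] H)) ⊗[ℂ] H) →ₗ[ℂ] (H ⊗[ℂ] H) ⊗[ℂ] (H ⊗[ℂ] (H ⊗[ℂ] H)) :=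
  (TensorProduct.assoc ℂ H H (H ⊗[ℂ] (H ⊗[ℂ] H))).symm.toLinearMap ∘ₗ
    LinearMap.lTensor H (LinearMap.lTensor H (TensorProduct.assoc ℂ H H H).toLinearMap) ∘ₗ
    LinearMap.lTensor H (TensorProduct.assoc ℂ H (H ⊗[ℂ] H) H).toLinearMap

lemma alphaMap_tmul (f u1 u2 u3 k : H) :
    alphaMap H (f ⊗ₜ[ℂ] ((u1 ⊗ₜ[ℂ] (u2 ⊗ₜ[ℂ] u3)) ⊗ₜ[ℂ] k)) =
      (f ⊗ₜ[ℂ] u1) ⊗ₜ[ℂ] (u2 ⊗ₜ[ℂ] (u3 ⊗ₜ[ℂ] k)) := by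
  simp [alphaMap, TensorProduct.assoc_tmul, TensorProduct.assoc_symm_tmul]

lemma hRmap :
    TensorProduct.map (Coalgebra.comul (R := ℂ))
        (LinearMap.lTensor H (Coalgebra.comul (R := ℂ))) ∘ₗ T2 H =
      LinearMap.lTensor (H ⊗[ℂ] H) (T2 H) ∘ₗ
        (TensorProduct.assoc ℂ H H H).symm.toLinearMap ∘ₗ T2 H := by
  set Δ := (Coalgebra.comul (R := ℂ) (A := H)) with hΔ
  have swap1 : TensorProduct.map Δ (LinearMap.lTensor H Δ) =
      (LinearMap.lTensor H Δ).lTensor (H ⊗[ℂ] H) ∘ₗ Δ.rTensor (H ⊗[ℂ] H) :=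
    (LinearMap.lTensor_comp_rTensor (f := Δ) (g := LinearMap.lTensor H Δ)).symm
  have swap2 : Δ.rTensor (H ⊗[ℂ] H) ∘ₗ LinearMap.lTensor H Δ =
      LinearMap.lTensor (H ⊗[ℂ] H) Δ ∘ₗ Δ.rTensor H := by
    rw [LinearMap.rTensor_comp_lTensor, LinearMap.lTensor_comp_rTensor]
  have co : Δ.rTensor H ∘ₗ Δ =
      (TensorProduct.assoc ℂ H H H).symm.toLinearMap ∘ₗ (LinearMap.lTensor H Δ ∘ₗ Δ) := by
    rw [← LinearMap.comp_assoc]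
    exact (Coalgebra.coassoc_symm (R := ℂ) (A := H)).symm
  calc TensorProduct.map Δ (LinearMap.lTensor H Δ) ∘ₗ T2 H
      = ((LinearMap.lTensor H Δ).lTensor (H ⊗[ℂ] H) ∘ₗ Δ.rTensor (H ⊗[ℂ] H)) ∘ₗ
          LinearMap.lTensor H Δ ∘ₗ Δ := by rw [swap1]; rfl
    _ = (LinearMap.lTensor H Δ).lTensor (H ⊗[ℂ] H) ∘ₗ
          (Δ.rTensor (H ⊗[ℂ] H) ∘ₗ LinearMap.lTensor H Δ) ∘ₗ Δ := by
        simp only [LinearMap.comp_assoc]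
    _ = (LinearMap.lTensor H Δ).lTensor (H ⊗[ℂ] H) ∘ₗ
          (LinearMap.lTensor (H ⊗[ℂ] H) Δ ∘ₗ Δ.rTensor H) ∘ₗ Δ := by rw [swap2]
    _ = ((LinearMap.lTensor H Δ).lTensor (H ⊗[ℂ] H) ∘ₗ LinearMap.lTensor (H ⊗[ℂ] H) Δ) ∘ₗ
          (Δ.rTensor H ∘ₗ Δ) := by simp only [LinearMap.comp_assoc]
    _ = LinearMap.lTensor (H ⊗[ℂ] H) (T2 H) ∘ₗ
          ((TensorProduct.assoc ℂ H H H).symm.toLinearMap ∘ₗ (LinearMap.lTensor H Δ ∘ₗ Δ)) := by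
        rw [co, ← LinearMap.lTensor_comp]; rfl
    _ = LinearMap.lTensor (H ⊗[ℂ] H) (T2 H) ∘ₗ
          (TensorProduct.assoc ℂ H H H).symm.toLinearMap ∘ₗ T2 H := by
        rw [T2]


lemma hLmap (H : Type*) [Ring H] [HopfAlgebra ℂ H] :
    alphaMap H ∘ₗ LinearMap.lTensor H ((T2 H).rTensor H) ∘ₗ T2 H =
      LinearMap.lTensor (H ⊗[ℂ] H) (T2 H) ∘ₗ
        (TensorProduct.assoc ℂ H H H).symm.toLinearMap ∘ₗ T2 H := by
  set Δ := (Coalgebra.comul (R := ℂ) (A := H)) with hΔ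
  set L := LinearMap.lTensor H Δ with hL
  have co : Δ.rTensor H ∘ₗ Δ =
      (TensorProduct.assoc ℂ H H H).symm.toLinearMap ∘ₗ (L ∘ₗ Δ) := by
    rw [← LinearMap.comp_assoc]
    exact (Coalgebra.coassoc_symm (R := ℂ) (A := H)).symm
  have hinv : (TensorProduct.assoc ℂ H H H).toLinearMap ∘ₗ
      (TensorProduct.assoc ℂ H H H).symm.toLinearMap = LinearMap.id :=
    LinearMap.ext fun x => (TensorProduct.assoc ℂ H H H).apply_symm_apply x
  have nat1 : (TensorProduct.assoc ℂ H (H ⊗[ℂ] H) H).toLinearMap ∘ₗ L.rTensor H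
      = LinearMap.lTensor H (Δ.rTensor H) ∘ₗ (TensorProduct.assoc ℂ H H H).toLinearMap :=
    (TensorProduct.map_map_comp_assoc_eq LinearMap.id Δ LinearMap.id).symm
  have hS : (T2 H).rTensor H ∘ₗ Δ = L.rTensor H ∘ₗ
      ((TensorProduct.assoc ℂ H H H).symm.toLinearMap ∘ₗ (L ∘ₗ Δ)) := by
    have h1 : (T2 H).rTensor H = L.rTensor H ∘ₗ Δ.rTensor H := by
      rw [T2, ← hΔ, ← hL, LinearMap.rTensor_comp]
    rw [h1, LinearMap.comp_assoc, co]
  have hC : (LinearMap.lTensor H (TensorProduct.assoc ℂ H H H).toLinearMap ∘ₗ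
        (TensorProduct.assoc ℂ H (H ⊗[ℂ] H) H).toLinearMap) ∘ₗ ((T2 H).rTensor H ∘ₗ Δ) =
      LinearMap.lTensor H (T2 H) ∘ₗ Δ := by
    calc (LinearMap.lTensor H (TensorProduct.assoc ℂ H H H).toLinearMap ∘ₗ
          (TensorProduct.assoc ℂ H (H ⊗[ℂ] H) H).toLinearMap) ∘ₗ ((T2 H).rTensor H ∘ₗ Δ)
        = LinearMap.lTensor H (TensorProduct.assoc ℂ H H H).toLinearMap ∘ₗ
          (((TensorProduct.assoc ℂ H (H ⊗[ℂ] H) H).toLinearMap ∘ₗ L.rTensor H) ∘ₗ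
            ((TensorProduct.assoc ℂ H H H).symm.toLinearMap ∘ₗ (L ∘ₗ Δ))) := by
          rw [hS]; rfl
      _ = LinearMap.lTensor H (TensorProduct.assoc ℂ H H H).toLinearMap ∘ₗ
          ((LinearMap.lTensor H (Δ.rTensor H) ∘ₗ (TensorProduct.assoc ℂ H H H).toLinearMap) ∘ₗ
            ((TensorProduct.assoc ℂ H H H).symm.toLinearMap ∘ₗ (L ∘ₗ Δ))) := by
          rw [nat1]
      _ = LinearMap.lTensor H (TensorProduct.assoc ℂ H H H).toLinearMap ∘ₗ
          (LinearMap.lTensor H (Δ.rTensor H) ∘ₗ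
            (((TensorProduct.assoc ℂ H H H).toLinearMap ∘ₗ
              (TensorProduct.assoc ℂ H H H).symm.toLinearMap) ∘ₗ (L ∘ₗ Δ))) := rfl
      _ = LinearMap.lTensor H (TensorProduct.assoc ℂ H H H).toLinearMap ∘ₗ
          (LinearMap.lTensor H (Δ.rTensor H) ∘ₗ (L ∘ₗ Δ)) := by
          rw [hinv, LinearMap.id_comp]
      _ = (LinearMap.lTensor H (TensorProduct.assoc ℂ H H H).toLinearMap ∘ₗ
          (LinearMap.lTensor H (Δ.rTensor H) ∘ₗ L)) ∘ₗ Δ := rfl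
      _ = LinearMap.lTensor H ((TensorProduct.assoc ℂ H H H).toLinearMap ∘ₗ
            (Δ.rTensor H ∘ₗ Δ)) ∘ₗ Δ := by
          rw [hL, ← LinearMap.lTensor_comp, ← LinearMap.lTensor_comp]
      _ = LinearMap.lTensor H (T2 H) ∘ₗ Δ := by
          rw [T2, ← hΔ]
          congr 2
          exact Coalgebra.coassoc (R := ℂ) (A := H)
  have nat2 : (TensorProduct.assoc ℂ H H (H ⊗[ℂ] (H ⊗[ℂ] H))).symm.toLinearMap ∘ₗ
      LinearMap.lTensor H (LinearMap.lTensor H (T2 H)) =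
      LinearMap.lTensor (H ⊗[ℂ] H) (T2 H) ∘ₗ (TensorProduct.assoc ℂ H H H).symm.toLinearMap := by
    have e : TensorProduct.map (TensorProduct.map (LinearMap.id (M := H)) (LinearMap.id (M := H)))
        (T2 H) = LinearMap.lTensor (H ⊗[ℂ] H) (T2 H) := by
      rw [TensorProduct.map_id]; rfl
    rw [← e]
    exact (TensorProduct.map_map_comp_assoc_symm_eq LinearMap.id LinearMap.id (T2 H)).symm
  calc alphaMap H ∘ₗ LinearMap.lTensor H ((T2 H).rTensor H) ∘ₗ T2 H
      = (TensorProduct.assoc ℂ H H (H ⊗[ℂ] (H ⊗[ℂ] H))).symm.toLinearMap ∘ₗ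
        ((LinearMap.lTensor H (LinearMap.lTensor H (TensorProduct.assoc ℂ H H H).toLinearMap) ∘ₗ
          LinearMap.lTensor H (TensorProduct.assoc ℂ H (H ⊗[ℂ] H) H).toLinearMap) ∘ₗ
          ((LinearMap.lTensor H ((T2 H).rTensor H) ∘ₗ L) ∘ₗ Δ)) := by
        rw [alphaMap, T2, ← hΔ, ← hL]; rfl
      _ = (TensorProduct.assoc ℂ H H (H ⊗[ℂ] (H ⊗[ℂ] H))).symm.toLinearMap ∘ₗ
        (LinearMap.lTensor H (LinearMap.lTensor H (TensorProduct.assoc ℂ H H H).toLinearMap ∘ₗ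
          (TensorProduct.assoc ℂ H (H ⊗[ℂ] H) H).toLinearMap) ∘ₗ
          (LinearMap.lTensor H ((T2 H).rTensor H ∘ₗ Δ) ∘ₗ Δ)) := by
        rw [hL, ← LinearMap.lTensor_comp, ← LinearMap.lTensor_comp]
      _ = (TensorProduct.assoc ℂ H H (H ⊗[ℂ] (H ⊗[ℂ] H))).symm.toLinearMap ∘ₗ
        ((LinearMap.lTensor H (LinearMap.lTensor H (TensorProduct.assoc ℂ H H H).toLinearMap ∘ₗ
          (TensorProduct.assoc ℂ H (H ⊗[ℂ] H) H).toLinearMap) ∘ₗ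
          LinearMap.lTensor H ((T2 H).rTensor H ∘ₗ Δ)) ∘ₗ Δ) := rfl
      _ = (TensorProduct.assoc ℂ H H (H ⊗[ℂ] (H ⊗[ℂ] H))).symm.toLinearMap ∘ₗ
        (LinearMap.lTensor H ((LinearMap.lTensor H (TensorProduct.assoc ℂ H H H).toLinearMap ∘ₗ
          (TensorProduct.assoc ℂ H (H ⊗[ℂ] H) H).toLinearMap) ∘ₗ ((T2 H).rTensor H ∘ₗ Δ)) ∘ₗ
          Δ) := by
        rw [← LinearMap.lTensor_comp]
      _ = (TensorProduct.assoc ℂ H H (H ⊗[ℂ] (H ⊗[ℂ] H))).symm.toLinearMap ∘ₗ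
        (LinearMap.lTensor H (LinearMap.lTensor H (T2 H) ∘ₗ Δ) ∘ₗ Δ) := by
        rw [hC]
      _ = ((TensorProduct.assoc ℂ H H (H ⊗[ℂ] (H ⊗[ℂ] H))).symm.toLinearMap ∘ₗ
          LinearMap.lTensor H (LinearMap.lTensor H (T2 H))) ∘ₗ (LinearMap.lTensor H Δ ∘ₗ Δ) := by
        rw [LinearMap.lTensor_comp]; rfl
      _ = LinearMap.lTensor (H ⊗[ℂ] H) (T2 H) ∘ₗ
          (TensorProduct.assoc ℂ H H H).symm.toLinearMap ∘ₗ T2 H := by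
        rw [nat2, T2, ← hΔ]; rfl

variable {H A : Type*} [Ring H] [HopfAlgebra ℂ H] [Ring A] [Algebra ℂ A]

/-- The linear map implementing the CM product against `Δ²(h)`. -/
noncomputable def Psi (ρ : H →ₗ[ℂ] A →ₗ[ℂ] A) (a a' b b' : A) (h' : H) :
    H ⊗[ℂ] (H ⊗[ℂ] H) →ₗ[ℂ] A ⊗[ℂ] (H ⊗[ℂ] A) :=
  TensorProduct.map ((LinearMap.mulLeft ℂ a) ∘ₗ ρ.flip a')
    (TensorProduct.map (LinearMap.mulRight ℂ h')
      ((LinearMap.mulRight ℂ b) ∘ₗ ρ.flip b'))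

lemma Psi_tmul (ρ : H →ₗ[ℂ] A →ₗ[ℂ] A) (a a' b b' : A) (h' : H) (f g k : H) :
    Psi ρ a a' b b' h' (f ⊗ₜ[ℂ] (g ⊗ₜ[ℂ] k)) =
      (a * ρ f a') ⊗ₜ[ℂ] ((g * h') ⊗ₜ[ℂ] (ρ k b' * b)) := by
  simp [Psi, TensorProduct.map_tmul, LinearMap.mulLeft_apply, LinearMap.mulRight_apply,
    LinearMap.flip_apply]

/-- The linear map implementing the doubly-iterated CM product. -/
noncomputable def Lam (ρ : H →ₗ[ℂ] A →ₗ[ℂ] A) (a a' a'' b b' b'' : A) (p q r h'' : H) :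
    (H ⊗[ℂ] H) ⊗[ℂ] (H ⊗[ℂ] (H ⊗[ℂ] H)) →ₗ[ℂ] A ⊗[ℂ] (H ⊗[ℂ] A) :=
  TensorProduct.map
    ((LinearMap.mul' ℂ A) ∘ₗ
      TensorProduct.map ((LinearMap.mulLeft ℂ a) ∘ₗ ρ.flip a') (ρ.flip (ρ p a'')))
    (TensorProduct.map (LinearMap.mulRight ℂ (q * h''))
      ((LinearMap.mul' ℂ A) ∘ₗ
        TensorProduct.map (ρ.flip (ρ r b'')) ((LinearMap.mulRight ℂ b) ∘ₗ ρ.flip b')))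

lemma Lam_tmul (ρ : H →ₗ[ℂ] A →ₗ[ℂ] A) (a a' a'' b b' b'' : A) (p q r h'' : H)
    (f u1 u2 u3 k : H) :
    Lam ρ a a' a'' b b' b'' p q r h'' ((f ⊗ₜ[ℂ] u1) ⊗ₜ[ℂ] (u2 ⊗ₜ[ℂ] (u3 ⊗ₜ[ℂ] k))) =
      ((a * ρ f a') * ρ u1 (ρ p a'')) ⊗ₜ[ℂ]
        ((u2 * (q * h'')) ⊗ₜ[ℂ] (ρ u3 (ρ r b'') * (ρ k b' * b))) := by
  simp [Lam, TensorProduct.map_tmul, LinearMap.mulLeft_apply, LinearMap.mulRight_apply,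
    LinearMap.flip_apply, LinearMap.mul'_apply, mul_assoc]

end CM9

set_option maxHeartbeats 1000000
set_option synthInstance.maxHeartbeats 100000

/-- For a Hopf algebra `H` over `ℂ` and a left `H`-module algebra `A`
(action `ρ`), the Connes–Moscovici algebra `H_CM = A ⊗ H ⊗ Aᵒᵖ` with multiplication
`(a⊗h⊗b)·(a'⊗h'⊗b') = a(h₍₁₎▷a') ⊗ h₍₂₎h' ⊗ (h₍₃₎▷b')b` is an associative unital algebra with
unit `1⊗1⊗1`.  (Sweedler components are handled by quantifying over finite representations of
the iterated comultiplication.) -/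
theorem connesMoscovici_algebra_assoc_unital
    (H A : Type*) [Ring H] [HopfAlgebra ℂ H] [Ring A] [Algebra ℂ A]
    (ρ : H →ₗ[ℂ] A →ₗ[ℂ] A)
    (hρ1 : ρ 1 = LinearMap.id)
    (hρm : ∀ g h : H, ρ (g * h) = ρ g ∘ₗ ρ h)
    (hρa : ∀ (h : H) (a b : A) (ι : Type) (t : Finset ι) (f g : ι → H),
      Coalgebra.comul (R := ℂ) h = ∑ i ∈ t, f i ⊗ₜ[ℂ] g i →
      ρ h (a * b) = ∑ i ∈ t, ρ (f i) a * ρ (g i) b)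
    (hρu : ∀ h : H, ρ h 1 = Coalgebra.counit (R := ℂ) h • (1 : A))
    (mul : (A ⊗[ℂ] (H ⊗[ℂ] A)) →ₗ[ℂ] (A ⊗[ℂ] (H ⊗[ℂ] A)) →ₗ[ℂ] (A ⊗[ℂ] (H ⊗[ℂ] A)))
    (hmul : ∀ (a a' b b' : A) (h h' : H) (ι : Type) (t : Finset ι) (f g k : ι → H),
      ((LinearMap.lTensor H (Coalgebra.comul (R := ℂ))) ∘ₗ Coalgebra.comul (R := ℂ)) h =
          ∑ i ∈ t, f i ⊗ₜ[ℂ] (g i ⊗ₜ[ℂ] k i) →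
      mul (a ⊗ₜ[ℂ] (h ⊗ₜ[ℂ] b)) (a' ⊗ₜ[ℂ] (h' ⊗ₜ[ℂ] b')) =
        ∑ i ∈ t, (a * ρ (f i) a') ⊗ₜ[ℂ] ((g i * h') ⊗ₜ[ℂ] (ρ (k i) b' * b))) :
    (∀ x y z : A ⊗[ℂ] (H ⊗[ℂ] A), mul (mul x y) z = mul x (mul y z)) ∧
    (∀ x : A ⊗[ℂ] (H ⊗[ℂ] A),
      mul ((1 : A) ⊗ₜ[ℂ] ((1 : H) ⊗ₜ[ℂ] (1 : A))) x = x ∧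
      mul x ((1 : A) ⊗ₜ[ℂ] ((1 : H) ⊗ₜ[ℂ] (1 : A))) = x) := by
  classical
  have key : ∀ (a b a' b' : A) (h h' : H),
      mul (a ⊗ₜ[ℂ] (h ⊗ₜ[ℂ] b)) (a' ⊗ₜ[ℂ] (h' ⊗ₜ[ℂ] b')) =
        CM9.Psi ρ a a' b b' h' (CM9.T2 H h) := by
    intro a b a' b' h h'
    obtain ⟨n, f, g, k, hx⟩ := CM9.rep3 (CM9.T2 H h)
    rw [hmul a a' b b' h h' ℕ (Finset.range n) f g k hx, hx, map_sum]
    exact Finset.sum_congr rfl fun i _ => (CM9.Psi_tmul ρ a a' b b' h' _ _ _).symm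
  have main : ∀ (a b a' b' a'' b'' : A) (h h' h'' : H),
      mul (mul (a ⊗ₜ[ℂ] (h ⊗ₜ[ℂ] b)) (a' ⊗ₜ[ℂ] (h' ⊗ₜ[ℂ] b'))) (a'' ⊗ₜ[ℂ] (h'' ⊗ₜ[ℂ] b'')) =
      mul (a ⊗ₜ[ℂ] (h ⊗ₜ[ℂ] b)) (mul (a' ⊗ₜ[ℂ] (h' ⊗ₜ[ℂ] b')) (a'' ⊗ₜ[ℂ] (h'' ⊗ₜ[ℂ] b''))) := by
    intro a b a' b' a'' b'' h h' h''
    obtain ⟨m, p, q, r, hT⟩ := CM9.rep3 (CM9.T2 H h')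
    set Λ : (H ⊗[ℂ] H) ⊗[ℂ] (H ⊗[ℂ] (H ⊗[ℂ] H)) →ₗ[ℂ] A ⊗[ℂ] (H ⊗[ℂ] A) :=
      ∑ j ∈ Finset.range m, CM9.Lam ρ a a' a'' b b' b'' (p j) (q j) (r j) h'' with hΛ
    set R : H ⊗[ℂ] (H ⊗[ℂ] H) →ₗ[ℂ] A ⊗[ℂ] (H ⊗[ℂ] A) :=
      ∑ j ∈ Finset.range m,
        CM9.Psi ρ a (a' * ρ (p j) a'') b (ρ (r j) b'' * b') (q j * h'') with hR
    have hA : ∀ f g k : H,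
        mul ((a * ρ f a') ⊗ₜ[ℂ] ((g * h') ⊗ₜ[ℂ] (ρ k b' * b))) (a'' ⊗ₜ[ℂ] (h'' ⊗ₜ[ℂ] b'')) =
          Λ (CM9.alphaMap H (f ⊗ₜ[ℂ] ((CM9.T2 H g) ⊗ₜ[ℂ] k))) := by
      intro f g k
      rw [key, CM9.T2_mul]
      generalize CM9.T2 H g = w
      induction w using TensorProduct.induction_on with
      | zero =>
          rw [zero_mul, LinearMap.map_zero, TensorProduct.zero_tmul, TensorProduct.tmul_zero,
            LinearMap.map_zero, LinearMap.map_zero]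
      | add w1 w2 hw1 hw2 =>
          simp only [add_mul, map_add, TensorProduct.add_tmul, TensorProduct.tmul_add, hw1, hw2]
      | tmul u1 v =>
          induction v using TensorProduct.induction_on with
          | zero =>
              rw [TensorProduct.tmul_zero, zero_mul, LinearMap.map_zero,
                TensorProduct.zero_tmul, TensorProduct.tmul_zero,
                LinearMap.map_zero, LinearMap.map_zero]
          | add v1 v2 hv1 hv2 =>
              simp only [TensorProduct.tmul_add, TensorProduct.add_tmul, add_mul, map_add,
                hv1, hv2]
          | tmul u2 u3 =>
              rw [hT, Finset.mul_sum, map_sum, CM9.alphaMap_tmul, hΛ, LinearMap.sum_apply]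
              refine Finset.sum_congr rfl fun j _ => ?_
              rw [Algebra.TensorProduct.tmul_mul_tmul, Algebra.TensorProduct.tmul_mul_tmul,
                CM9.Psi_tmul, CM9.Lam_tmul, hρm u1 (p j), hρm u3 (r j)]
              simp only [LinearMap.comp_apply]
              simp [mul_assoc]
    have hBj : ∀ (j : ℕ) (f g k : H),
        CM9.Lam ρ a a' a'' b b' b'' (p j) (q j) (r j) h''
            (TensorProduct.map (Coalgebra.comul (R := ℂ))
              (LinearMap.lTensor H (Coalgebra.comul (R := ℂ))) (f ⊗ₜ[ℂ] (g ⊗ₜ[ℂ] k))) =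
          CM9.Psi ρ a (a' * ρ (p j) a'') b (ρ (r j) b'' * b') (q j * h'')
            (f ⊗ₜ[ℂ] (g ⊗ₜ[ℂ] k)) := by
      intro j f g k
      obtain ⟨s, f1, f2, hf⟩ := CM9.rep2 (Coalgebra.comul (R := ℂ) f)
      obtain ⟨s', k1, k2, hk⟩ := CM9.rep2 (Coalgebra.comul (R := ℂ) k)
      rw [TensorProduct.map_tmul, LinearMap.lTensor_tmul, CM9.Psi_tmul,
        hρa f a' (ρ (p j) a'') ℕ (Finset.range s) f1 f2 hf,
        hρa k (ρ (r j) b'') b' ℕ (Finset.range s') k1 k2 hk, hf, hk]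
      simp only [Finset.mul_sum, Finset.sum_mul, TensorProduct.tmul_sum,
        TensorProduct.sum_tmul, map_sum]
      refine Finset.sum_congr rfl fun i _ => ?_
      refine Finset.sum_congr rfl fun i' _ => ?_
      rw [CM9.Lam_tmul]
      simp [mul_assoc]
    have hB : ∀ f g k : H,
        Λ (TensorProduct.map (Coalgebra.comul (R := ℂ))
            (LinearMap.lTensor H (Coalgebra.comul (R := ℂ))) (f ⊗ₜ[ℂ] (g ⊗ₜ[ℂ] k))) =
          R (f ⊗ₜ[ℂ] (g ⊗ₜ[ℂ] k)) := by
      intro f g k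
      rw [hΛ, hR, LinearMap.sum_apply, LinearMap.sum_apply]
      exact Finset.sum_congr rfl fun j _ => hBj j f g k
    calc mul (mul (a ⊗ₜ[ℂ] (h ⊗ₜ[ℂ] b)) (a' ⊗ₜ[ℂ] (h' ⊗ₜ[ℂ] b'))) (a'' ⊗ₜ[ℂ] (h'' ⊗ₜ[ℂ] b''))
        = (mul.flip (a'' ⊗ₜ[ℂ] (h'' ⊗ₜ[ℂ] b'')) ∘ₗ CM9.Psi ρ a a' b b' h') (CM9.T2 H h) := by
          rw [key a b a' b' h h']; rfl
      _ = (Λ ∘ₗ CM9.alphaMap H ∘ₗ LinearMap.lTensor H ((CM9.T2 H).rTensor H)) (CM9.T2 H h) := by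
          refine CM9.ext_pt _ _ (fun f g k => ?_) (CM9.T2 H h)
          simp only [LinearMap.comp_apply, LinearMap.flip_apply, CM9.Psi_tmul,
            LinearMap.lTensor_tmul, LinearMap.rTensor_tmul]
          exact hA f g k
      _ = Λ ((CM9.alphaMap H ∘ₗ LinearMap.lTensor H ((CM9.T2 H).rTensor H) ∘ₗ CM9.T2 H) h) := rfl
      _ = Λ ((LinearMap.lTensor (H ⊗[ℂ] H) (CM9.T2 H) ∘ₗ
              (TensorProduct.assoc ℂ H H H).symm.toLinearMap ∘ₗ CM9.T2 H) h) := by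
          rw [CM9.hLmap]
      _ = Λ ((TensorProduct.map (Coalgebra.comul (R := ℂ))
              (LinearMap.lTensor H (Coalgebra.comul (R := ℂ))) ∘ₗ CM9.T2 H) h) := by
          rw [CM9.hRmap]
      _ = (Λ ∘ₗ TensorProduct.map (Coalgebra.comul (R := ℂ))
              (LinearMap.lTensor H (Coalgebra.comul (R := ℂ)))) (CM9.T2 H h) := rfl
      _ = R (CM9.T2 H h) := by
          refine CM9.ext_pt _ _ (fun f g k => ?_) (CM9.T2 H h)
          simp only [LinearMap.comp_apply]
          exact hB f g k
      _ = ∑ j ∈ Finset.range m, CM9.Psi ρ a (a' * ρ (p j) a'') b (ρ (r j) b'' * b')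
            (q j * h'') (CM9.T2 H h) := by rw [hR, LinearMap.sum_apply]
      _ = ∑ j ∈ Finset.range m, mul (a ⊗ₜ[ℂ] (h ⊗ₜ[ℂ] b))
            ((a' * ρ (p j) a'') ⊗ₜ[ℂ] ((q j * h'') ⊗ₜ[ℂ] (ρ (r j) b'' * b'))) :=
          Finset.sum_congr rfl fun j _ => (key a b _ _ h _).symm
      _ = mul (a ⊗ₜ[ℂ] (h ⊗ₜ[ℂ] b)) (∑ j ∈ Finset.range m,
            (a' * ρ (p j) a'') ⊗ₜ[ℂ] ((q j * h'') ⊗ₜ[ℂ] (ρ (r j) b'' * b'))) :=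
          (map_sum (mul (a ⊗ₜ[ℂ] (h ⊗ₜ[ℂ] b))) _ _).symm
      _ = mul (a ⊗ₜ[ℂ] (h ⊗ₜ[ℂ] b)) (CM9.Psi ρ a' a'' b' b'' h'' (CM9.T2 H h')) := by
          congr 1
          rw [hT, map_sum]
          exact Finset.sum_congr rfl fun j _ => (CM9.Psi_tmul ρ a' a'' b' b'' h'' _ _ _).symm
      _ = mul (a ⊗ₜ[ℂ] (h ⊗ₜ[ℂ] b)) (mul (a' ⊗ₜ[ℂ] (h' ⊗ₜ[ℂ] b')) (a'' ⊗ₜ[ℂ] (h'' ⊗ₜ[ℂ] b''))) := by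
          rw [key a' b' a'' b'' h' h'']
  refine ⟨?_, ?_⟩
  · intro x y z
    have h1 : ∀ (a' b' a'' b'' : A) (h' h'' : H) (x : A ⊗[ℂ] (H ⊗[ℂ] A)),
        mul (mul x (a' ⊗ₜ[ℂ] (h' ⊗ₜ[ℂ] b'))) (a'' ⊗ₜ[ℂ] (h'' ⊗ₜ[ℂ] b'')) =
          mul x (mul (a' ⊗ₜ[ℂ] (h' ⊗ₜ[ℂ] b')) (a'' ⊗ₜ[ℂ] (h'' ⊗ₜ[ℂ] b''))) := by
      intro a' b' a'' b'' h' h'' x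
      exact CM9.ext_pt
        (mul.flip (a'' ⊗ₜ[ℂ] (h'' ⊗ₜ[ℂ] b'')) ∘ₗ mul.flip (a' ⊗ₜ[ℂ] (h' ⊗ₜ[ℂ] b')))
        (mul.flip (mul (a' ⊗ₜ[ℂ] (h' ⊗ₜ[ℂ] b')) (a'' ⊗ₜ[ℂ] (h'' ⊗ₜ[ℂ] b''))))
        (fun a h b => main a b a' b' a'' b'' h h' h'') x
    have h2 : ∀ (a'' b'' : A) (h'' : H) (x y : A ⊗[ℂ] (H ⊗[ℂ] A)),
        mul (mul x y) (a'' ⊗ₜ[ℂ] (h'' ⊗ₜ[ℂ] b'')) =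
          mul x (mul y (a'' ⊗ₜ[ℂ] (h'' ⊗ₜ[ℂ] b''))) := by
      intro a'' b'' h'' x y
      exact CM9.ext_pt
        (mul.flip (a'' ⊗ₜ[ℂ] (h'' ⊗ₜ[ℂ] b'')) ∘ₗ mul x)
        (mul x ∘ₗ mul.flip (a'' ⊗ₜ[ℂ] (h'' ⊗ₜ[ℂ] b'')))
        (fun a' h' b' => h1 a' b' a'' b'' h' h'' x) y
    exact CM9.ext_pt (mul (mul x y)) (mul x ∘ₗ mul y)
      (fun a'' h'' b'' => h2 a'' b'' h'' x y) z
  · intro x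
    constructor
    · refine CM9.ext_pt (mul ((1 : A) ⊗ₜ[ℂ] ((1 : H) ⊗ₜ[ℂ] (1 : A)))) LinearMap.id
        (fun a' h' b' => ?_) x
      rw [key, CM9.T2_one, CM9.Psi_tmul, hρ1]
      simp
    · refine CM9.ext_pt (mul.flip ((1 : A) ⊗ₜ[ℂ] ((1 : H) ⊗ₜ[ℂ] (1 : A)))) LinearMap.id
        (fun a h b => ?_) x
      show mul (a ⊗ₜ[ℂ] (h ⊗ₜ[ℂ] b)) ((1 : A) ⊗ₜ[ℂ] ((1 : H) ⊗ₜ[ℂ] (1 : A))) = _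
      rw [key]
      have hptw : CM9.Psi ρ a 1 b 1 1 (CM9.T2 H h) =
          ((TensorProduct.mk ℂ A (H ⊗[ℂ] A) a) ∘ₗ
            ((TensorProduct.mk ℂ H A).flip b) ∘ₗ CM9.Emap H) (CM9.T2 H h) := by
        refine CM9.ext_pt _ _ (fun f g k => ?_) (CM9.T2 H h)
        simp only [CM9.Psi_tmul, LinearMap.comp_apply, CM9.Emap_tmul, hρu,
          LinearMap.flip_apply, TensorProduct.mk_apply]
        simp only [mul_one, mul_smul_comm, smul_mul_assoc, one_mul]
        simp only [TensorProduct.smul_tmul, TensorProduct.tmul_smul]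
        rw [smul_comm]
      rw [hptw]
      simp only [LinearMap.comp_apply, CM9.Emap_T2, TensorProduct.mk_apply,
        LinearMap.flip_apply, LinearMap.id_apply]
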